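/- For every integer k ≥ 0, the following identity of formal power series in q with coefficients in ℤ[z] holds: Σ_{n,s} b(n,k,s) q^n z^s = q^{k²} · ∏_{j=1}^{k} (1 + z q^j)/(1 − q^j), where b(n,k,s) is the number of basis partitions of n with Durfee square size k and signature s. -/

import Mathlib

open Finset
open scoped Classical

namespace BasisPartitions

/-! ### Ordinary partitions -/

/-- The parts of a partition, listed in weakly decreasing order. -/
def sparts {n : ℕ} (π : n.Partition) : List ℕ := π.parts.sort (· ≥ ·)

/-- `conj L j` is the number of parts that are `≥ j`, i.e. the `j`-th part of the
conjugate partition (for `j ≥ 1`). -/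
def conj (L : List ℕ) (j : ℕ) : ℕ := L.countP (fun b => j ≤ b)

/-- The Durfee square size: the largest `k` such that the `k`-th part is `≥ k`. -/
def durfee (L : List ℕ) : ℕ := (List.range L.length).countP (fun i => i + 1 ≤ L.getD i 0)

/-- The `(i+1)`-st successive rank `r_{i+1} = b_{i+1} - c_{i+1}` (0-indexed `i`). -/
def rank (L : List ℕ) (i : ℕ) : ℤ := (L.getD i 0 : ℤ) - (conj L (i + 1) : ℤ)

/-- The successive rank vector `(r_1, ..., r_k)` where `k` is the Durfee square size. -/
def ranks (L : List ℕ) : List ℤ := (List.range (durfee L)).map (rank L)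

/-- A basis partition: the partitioned number is minimal among all partitions having
the same successive rank vector. -/
def IsBasis {n : ℕ} (π : n.Partition) : Prop :=
  ∀ (m : ℕ) (π' : m.Partition), ranks (sparts π') = ranks (sparts π) → n ≤ m

/-- The signature: the number of distinct part sizes below the Durfee square. -/
def sig (L : List ℕ) : ℕ := ((L.drop (durfee L)).dedup).length

/-- `b(n;k)`: the number of basis partitions of `n` with Durfee square size `k`. -/
noncomputable def bCount (n k : ℕ) : ℕ :=
  Nat.card {π : n.Partition // IsBasis π ∧ durfee (sparts π) = k}

/-- `b(n,k,s)`: the number of basis partitions of `n` with Durfee square size `k`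
and signature `s`. -/
noncomputable def bCount3 (n k s : ℕ) : ℕ :=
  Nat.card {π : n.Partition // IsBasis π ∧ durfee (sparts π) = k ∧ sig (sparts π) = s}

/-- `B(n;j)`: the number of basis partitions of `n` with signature `j`. -/
noncomputable def BCount (n j : ℕ) : ℕ :=
  Nat.card {π : n.Partition // IsBasis π ∧ sig (sparts π) = j}

/-- Rogers–Ramanujan condition: exactly `k` parts, consecutive gaps `≥ 2`, last part `≥ 1`. -/
def RR (L : List ℕ) (k : ℕ) : Prop :=
  L.length = k ∧ (∀ i, i + 1 < k → L.getD (i + 1) 0 + 2 ≤ L.getD i 0) ∧ 1 ≤ L.getD (k - 1) 0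

/-- `t(π)` for a Rogers–Ramanujan partition: the number of gaps `> 2`, plus 1 if the
last part is `> 1`. -/
def tRR (L : List ℕ) (k : ℕ) : ℕ :=
  ((Finset.range (k - 1)).filter (fun i => L.getD (i + 1) 0 + 2 < L.getD i 0)).card +
    (if 1 < L.getD (k - 1) 0 then 1 else 0)

/-- Primary condition: exactly `k` parts, each part `≥ k`. -/
def Primary (L : List ℕ) (k : ℕ) : Prop := L.length = k ∧ ∀ x ∈ L, k ≤ x

/-- `t(π)` for a primary partition: the number of strict descents, plus 1 if the
last part is `> k`. -/
def tP (L : List ℕ) (k : ℕ) : ℕ :=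
  ((Finset.range (k - 1)).filter (fun i => L.getD (i + 1) 0 < L.getD i 0)).card +
    (if k < L.getD (k - 1) 0 then 1 else 0)

/-- A complete basis partition: every `j` with `1 ≤ j ≤ k-1` occurs as a part of `π_b`
(a row below the Durfee square) or as a part of `π_r` (a column length strictly to the
right of the Durfee square). -/
def IsComplete {n : ℕ} (π : n.Partition) : Prop :=
  ∀ j : ℕ, 1 ≤ j → j < durfee (sparts π) →
    j ∈ (sparts π).drop (durfee (sparts π)) ∨
      ∃ c : ℕ, durfee (sparts π) < c ∧ conj (sparts π) c = j

/-- `b_c(n)`: the number of complete basis partitions of `n`. -/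
noncomputable def bc (n : ℕ) : ℕ := Nat.card {π : n.Partition // IsBasis π ∧ IsComplete π}

/-! ### Partitions with non-repeating odd parts and their 2-modular graphs -/

/-- Partitions with non-repeating (distinct) odd parts. -/
def Pod {n : ℕ} (π : n.Partition) : Prop := ∀ x, Odd x → π.parts.count x ≤ 1

/-- The size (sum of entries) of the `c`-th column (1-indexed) of the 2-modular graph. -/
def mcolSize (L : List ℕ) (c : ℕ) : ℕ :=
  (L.map (fun x => if 2 * c ≤ x then 2 else if x = 2 * c - 1 then 1 else 0)).sum

/-- The length (number of entries) of the `c`-th column (1-indexed) of the 2-modular graph. -/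
def mcolLen (L : List ℕ) (c : ℕ) : ℕ := L.countP (fun x => 2 * c - 1 ≤ x)

/-- The number of entries in a row of the 2-modular graph recording the part `x`,
namely `⌈x/2⌉`. -/
def mrowLen (x : ℕ) : ℕ := (x + 1) / 2

/-- The 2-modular Durfee square size: the largest `k` with `⌈b_k/2⌉ ≥ k`. -/
def mdurfee (L : List ℕ) : ℕ := (List.range L.length).countP (fun i => 2 * i + 1 ≤ L.getD i 0)

/-- The `(i+1)`-st 2-modular successive rank: (size of row `i+1`) − (size of column `i+1`). -/
def mrank (L : List ℕ) (i : ℕ) : ℤ := (L.getD i 0 : ℤ) - (mcolSize L (i + 1) : ℤ)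

/-- The 2-modular successive rank vector. -/
def mranks (L : List ℕ) : List ℤ := (List.range (mdurfee L)).map (mrank L)

/-- A minimal basis partition in `P_{o,d}`: the partitioned number is minimal among all
partitions with non-repeating odd parts having the same 2-modular successive rank vector. -/
def MinBasis {n : ℕ} (μ : n.Partition) : Prop :=
  Pod μ ∧ ∀ (m : ℕ) (μ' : m.Partition), Pod μ' →
    mranks (sparts μ') = mranks (sparts μ) → n ≤ m

/-- A basis partition in `P_{o,d}`: no row of the 2-modular graph strictly below the Durfee
square has size equal to the size of a column strictly to the right of the Durfee square. -/
def PodBasis {n : ℕ} (π : n.Partition) : Prop :=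
  Pod π ∧ ∀ i, mdurfee (sparts π) ≤ i → i < (sparts π).length →
    ∀ c, mdurfee (sparts π) < c → mcolSize (sparts π) c ≠ (sparts π).getD i 0

/-- The signature of a basis partition in `P_{o,d}`: the number of distinct sizes among the
rows of the 2-modular graph strictly below the Durfee square. -/
def msig (L : List ℕ) : ℕ := ((L.drop (mdurfee L)).dedup).length

/-- The ℓ-signature: the number of distinct lengths among the rows of the 2-modular
graph strictly below the Durfee square. -/
def lsig (L : List ℕ) : ℕ := (((L.drop (mdurfee L)).map mrowLen).dedup).length

/-- `b(n;j)` for `P_{o,d}`: the number of basis partitions of `n` in `P_{o,d}` with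
signature `j`. -/
noncomputable def podB (n j : ℕ) : ℕ := Nat.card {π : n.Partition // PodBasis π ∧ msig (sparts π) = j}

/-- The number of odd parts. -/
def numOdd (L : List ℕ) : ℕ := L.countP (fun x => x % 2 = 1)

/-- A special partition: distinct parts with consecutive differences `≥ 4`, where a
difference equal to `4` is permitted only when both parts are even. -/
def Special (L : List ℕ) : Prop :=
  ∀ i, i + 1 < L.length →
    L.getD (i + 1) 0 + 4 ≤ L.getD i 0 ∧
      (L.getD i 0 = L.getD (i + 1) 0 + 4 → Even (L.getD i 0) ∧ Even (L.getD (i + 1) 0))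

/-- The `i`-th part of a special partition, with the convention that the part just after
the last one is `-2`. -/
def hpart (L : List ℕ) (i : ℕ) : ℤ := if i < L.length then (L.getD i 0 : ℤ) else -2

/-- `ℓ(π)`: the number of gaps `> 4` in a special partition, with the convention
`h_{k+1} = -2`. -/
def ell (L : List ℕ) : ℕ :=
  ((Finset.range L.length).filter (fun i => 4 < hpart L i - hpart L (i + 1))).card


/-! ### chunk 1: list auxiliaries -/

private lemma list_sum_map_range {M : Type*} [AddCommMonoid M] (f : ℕ → M) (n : ℕ) :
    ((List.range n).map f).sum = ∑ i ∈ Finset.range n, f i := by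
  induction n with
  | zero => simp
  | succ n ih =>
    rw [List.range_succ, List.map_append, List.sum_append, Finset.sum_range_succ, ih]; simp

lemma filter_range_antitone (p : ℕ → Bool) (hp : ∀ i j : ℕ, i ≤ j → p j = true → p i = true)
    (n : ℕ) :
    (List.range n).filter p = List.range ((List.range n).countP p) := by
  induction n with
  | zero => simp
  | succ n ih =>
    rw [List.range_succ, List.filter_append, List.countP_append, ih]
    by_cases h : p n = true
    · have hall : ∀ i ∈ List.range n, p i = true := fun i hi =>
        hp i n (Nat.le_of_lt (List.mem_range.mp hi)) h
      have h1 : (List.range n).countP p = n := by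
        rw [List.countP_eq_length.mpr hall, List.length_range]
      simp [h, h1, List.range_succ]
    · simp [h]

lemma getD_anti {L : List ℕ} (hL : L.Pairwise (· ≥ ·)) {i j : ℕ} (hij : i ≤ j) :
    L.getD j 0 ≤ L.getD i 0 := by
  rcases lt_or_ge j L.length with hj | hj
  · have hi : i < L.length := lt_of_le_of_lt hij hj
    rw [List.getD_eq_getElem _ _ hj, List.getD_eq_getElem _ _ hi]
    rcases eq_or_lt_of_le hij with rfl | h
    · exact le_rfl
    · exact hL.rel_get_of_lt (a := ⟨i, hi⟩) (b := ⟨j, hj⟩) h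
  · rw [List.getD_eq_default _ _ hj]; exact Nat.zero_le _

lemma durfee_le_length (L : List ℕ) : durfee L ≤ L.length :=
  le_trans List.countP_le_length (le_of_eq List.length_range)

lemma durfee_filter {L : List ℕ} (hL : L.Pairwise (· ≥ ·)) :
    (List.range L.length).filter (fun i => decide (i + 1 ≤ L.getD i 0)) =
      List.range (durfee L) := by
  apply filter_range_antitone
  intro i j hij hj
  simp only [decide_eq_true_eq] at hj ⊢
  calc i + 1 ≤ j + 1 := by omega
    _ ≤ L.getD j 0 := hj
    _ ≤ L.getD i 0 := getD_anti hL hij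

lemma durfee_spec₁ {L : List ℕ} (hL : L.Pairwise (· ≥ ·)) {i : ℕ} (hi : i < durfee L) :
    i + 1 ≤ L.getD i 0 := by
  have h2 : i ∈ List.range (durfee L) := List.mem_range.mpr hi
  rw [← durfee_filter hL, List.mem_filter] at h2
  simpa using h2.2

lemma durfee_spec₂ {L : List ℕ} (hL : L.Pairwise (· ≥ ·)) {i : ℕ} (h1 : durfee L ≤ i)
    (h2 : i < L.length) : L.getD i 0 ≤ i := by
  by_contra hc
  have h3 : i ∈ (List.range L.length).filter (fun i => decide (i + 1 ≤ L.getD i 0)) := by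
    rw [List.mem_filter]
    exact ⟨List.mem_range.mpr h2, by simp only [decide_eq_true_eq]; omega⟩
  rw [durfee_filter hL, List.mem_range] at h3
  omega

lemma getD_drop (L : List ℕ) (n i : ℕ) : (L.drop n).getD i 0 = L.getD (n + i) 0 := by
  rcases lt_or_ge (n + i) L.length with h | h
  · have h2 : i < (L.drop n).length := by rw [List.length_drop]; omega
    rw [List.getD_eq_getElem _ _ h2, List.getD_eq_getElem _ _ h, List.getElem_drop]
  · rw [List.getD_eq_default _ _ h, List.getD_eq_default]
    rw [List.length_drop]; omega

/-! ### chunk 2: tail sums, below, rows, mkL -/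

def tl (u : ℕ → ℕ) (k i : ℕ) : ℕ := ∑ j ∈ Finset.Ico i (k + 1), u j

lemma tl_zero_of_gt {u : ℕ → ℕ} {k i : ℕ} (h : k < i) : tl u k i = 0 := by
  unfold tl
  rw [Finset.Ico_eq_empty (by omega), Finset.sum_empty]

lemma tl_succ {u : ℕ → ℕ} {k i : ℕ} (h : i ≤ k) : tl u k i = u i + tl u k (i + 1) :=
  Finset.sum_eq_sum_Ico_succ_bot (by omega) u

lemma tl_anti {u : ℕ → ℕ} {k : ℕ} {i j : ℕ} (h : i ≤ j) : tl u k j ≤ tl u k i :=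
  Finset.sum_le_sum_of_subset (Finset.Ico_subset_Ico h le_rfl)

lemma tl_last {u : ℕ → ℕ} {k : ℕ} : tl u k k = u k := by
  unfold tl
  rw [Nat.Ico_succ_singleton, Finset.sum_singleton]

lemma tl_congr {u u' : ℕ → ℕ} {k : ℕ} (h : ∀ j, 1 ≤ j → j ≤ k → u j = u' j) {i : ℕ}
    (hi : 1 ≤ i) : tl u k i = tl u' k i := by
  unfold tl
  apply Finset.sum_congr rfl
  intro j hj
  rw [Finset.mem_Ico] at hj
  exact h j (by omega) (by omega)

lemma tl_top_succ {u : ℕ → ℕ} {k j : ℕ} (h : j ≤ k + 1) :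
    tl u (k + 1) j = tl u k j + u (k + 1) := by
  unfold tl
  rw [Finset.sum_Ico_succ_top (by omega)]

def below : ℕ → (ℕ → ℕ) → List ℕ
  | 0, _ => []
  | (j + 1), g => List.replicate (g (j + 1)) (j + 1) ++ below j g

lemma below_le {k : ℕ} {g : ℕ → ℕ} : ∀ x ∈ below k g, 1 ≤ x ∧ x ≤ k := by
  induction k with
  | zero => simp [below]
  | succ k ih =>
    intro x hx
    rw [below, List.mem_append] at hx
    rcases hx with hx | hx
    · have := List.eq_of_mem_replicate hx; omega
    · have := ih x hx; omega

lemma count_below {k : ℕ} {g : ℕ → ℕ} {v : ℕ} :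
    (below k g).count v = if 1 ≤ v ∧ v ≤ k then g v else 0 := by
  induction k with
  | zero => rw [below, List.count_nil, if_neg (by omega : ¬(1 ≤ v ∧ v ≤ 0))]
  | succ k ih =>
    rw [below, List.count_append, List.count_replicate, ih]
    by_cases h : v = k + 1
    · subst h
      rw [if_pos (by simp), if_neg (by omega), if_pos (by omega)]
      omega
    · rw [if_neg (by simp only [beq_iff_eq]; omega)]
      by_cases h2 : 1 ≤ v ∧ v ≤ k
      · rw [if_pos h2, if_pos (by omega), Nat.zero_add]
      · rw [if_neg h2, if_neg (by omega), Nat.zero_add]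

lemma mem_below_iff {k : ℕ} {g : ℕ → ℕ} {v : ℕ} :
    v ∈ below k g ↔ 1 ≤ v ∧ v ≤ k ∧ g v ≠ 0 := by
  rw [← List.count_pos_iff, count_below]
  split_ifs with h
  · omega
  · simp; omega

lemma countP_le_below {k : ℕ} {g : ℕ → ℕ} {j : ℕ} (hj : 1 ≤ j) :
    (below k g).countP (fun x => decide (j ≤ x)) = tl g k j := by
  induction k with
  | zero => rw [below]; simp [tl_zero_of_gt (by omega : (0:ℕ) < j)]
  | succ k ih =>
    rw [below, List.countP_append, ih]
    by_cases h : j ≤ k + 1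
    · rw [tl_top_succ h]
      have : (List.replicate (g (k + 1)) (k + 1)).countP (fun x => decide (j ≤ x)) =
          g (k + 1) := by
        rw [List.countP_eq_length.mpr, List.length_replicate]
        intro a ha
        have := List.eq_of_mem_replicate ha
        simp only [decide_eq_true_eq]; omega
      omega
    · rw [tl_zero_of_gt (by omega), tl_zero_of_gt (by omega)]
      rw [List.countP_eq_zero.mpr, Nat.add_zero]
      intro a ha
      have := List.eq_of_mem_replicate ha
      simp only [decide_eq_true_eq]; omega

lemma sum_below {k : ℕ} {g : ℕ → ℕ} :
    (below k g).sum = ∑ j ∈ Finset.Ico 1 (k + 1), j * g j := by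
  induction k with
  | zero => simp [below]
  | succ k ih =>
    rw [below, List.sum_append, ih, List.sum_replicate, smul_eq_mul]
    conv_rhs => rw [Finset.sum_Ico_succ_top (by omega : 1 ≤ k + 1) (fun j => j * g j)]
    ring

lemma sorted_below {k : ℕ} {g : ℕ → ℕ} : (below k g).Pairwise (· ≥ ·) := by
  induction k with
  | zero => simp [below]
  | succ k ih =>
    rw [below, List.pairwise_append]
    refine ⟨List.pairwise_replicate.mpr (Or.inr le_rfl), ih, ?_⟩
    intro a ha b hb
    have h1 := List.eq_of_mem_replicate ha
    have h2 := below_le b hb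
    omega

def rows (k : ℕ) (u : ℕ → ℕ) : List ℕ := (List.range k).map (fun t => k + tl u k (t + 1))

lemma length_rows {k : ℕ} {u : ℕ → ℕ} : (rows k u).length = k := by simp [rows]

lemma getD_rows {k : ℕ} {u : ℕ → ℕ} {i : ℕ} (h : i < k) :
    (rows k u).getD i 0 = k + tl u k (i + 1) := by
  rw [List.getD_eq_getElem _ _ (by rw [length_rows]; exact h)]
  simp [rows]

lemma mem_rows {k : ℕ} {u : ℕ → ℕ} {x : ℕ} (h : x ∈ rows k u) : k ≤ x := by
  rw [rows, List.mem_map] at h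
  obtain ⟨t, _, rfl⟩ := h
  omega

lemma sorted_rows {k : ℕ} {u : ℕ → ℕ} : (rows k u).Pairwise (· ≥ ·) := by
  rw [rows, List.pairwise_map]
  exact (List.pairwise_lt_range (n := k)).imp
    (fun h => Nat.add_le_add_left (tl_anti (by omega)) k)

lemma sum_tl {k : ℕ} {u : ℕ → ℕ} :
    ∑ t ∈ Finset.range k, tl u k (t + 1) = ∑ j ∈ Finset.Ico 1 (k + 1), j * u j := by
  have h1 : ∀ t ∈ Finset.range k, tl u k (t + 1) =
      ∑ j ∈ Finset.Ico 1 (k + 1), if t + 1 ≤ j then u j else 0 := by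
    intro t _
    rw [← Finset.sum_filter]
    unfold tl
    congr 1
    ext j
    simp only [Finset.mem_filter, Finset.mem_Ico]
    omega
  rw [Finset.sum_congr rfl h1, Finset.sum_comm]
  apply Finset.sum_congr rfl
  intro j hj
  rw [Finset.mem_Ico] at hj
  rw [← Finset.sum_filter]
  have h2 : (Finset.range k).filter (fun t => t + 1 ≤ j) = Finset.range j := by
    ext t
    simp only [Finset.mem_filter, Finset.mem_range]
    omega
  rw [h2, Finset.sum_const, Finset.card_range, smul_eq_mul]

lemma sum_rows {k : ℕ} {u : ℕ → ℕ} :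
    (rows k u).sum = k * k + ∑ j ∈ Finset.Ico 1 (k + 1), j * u j := by
  rw [rows, list_sum_map_range, Finset.sum_add_distrib, Finset.sum_const, Finset.card_range,
    smul_eq_mul, sum_tl]

def mkL (k : ℕ) (u g : ℕ → ℕ) : List ℕ := rows k u ++ below k g

lemma sum_mkL {k : ℕ} {u g : ℕ → ℕ} :
    (mkL k u g).sum = k * k + (∑ j ∈ Finset.Ico 1 (k + 1), j * u j) +
      ∑ j ∈ Finset.Ico 1 (k + 1), j * g j := by
  rw [mkL, List.sum_append, sum_rows, sum_below]

lemma sorted_mkL {k : ℕ} {u g : ℕ → ℕ} : (mkL k u g).Pairwise (· ≥ ·) := by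
  rw [mkL, List.pairwise_append]
  refine ⟨sorted_rows, sorted_below, ?_⟩
  intro a ha b hb
  have h1 := mem_rows ha
  have h2 := below_le b hb
  omega

lemma pos_mkL {k : ℕ} {u g : ℕ → ℕ} : ∀ x ∈ mkL k u g, 0 < x := by
  intro x hx
  rw [mkL, List.mem_append] at hx
  rcases hx with hx | hx
  · rw [rows, List.mem_map] at hx
    obtain ⟨t, ht, rfl⟩ := hx
    rw [List.mem_range] at ht
    omega
  · have := below_le x hx; omega

lemma getD_mkL {k : ℕ} {u g : ℕ → ℕ} {i : ℕ} (h : i < k) :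
    (mkL k u g).getD i 0 = k + tl u k (i + 1) := by
  rw [mkL, List.getD_append _ _ _ _ (by rw [length_rows]; exact h), getD_rows h]

lemma drop_mkL {k : ℕ} {u g : ℕ → ℕ} : (mkL k u g).drop k = below k g := by
  rw [mkL]
  exact List.drop_left' length_rows

lemma length_mkL {k : ℕ} {u g : ℕ → ℕ} :
    (mkL k u g).length = k + (below k g).length := by
  rw [mkL, List.length_append, length_rows]

/-! ### chunk 3: durfee/conj/ranks of mkL, extraction -/

lemma durfee_mkL {k : ℕ} {u g : ℕ → ℕ} : durfee (mkL k u g) = k := by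
  unfold durfee
  rw [length_mkL, List.range_add, List.countP_append]
  have h1 : (List.range k).countP (fun i => decide (i + 1 ≤ (mkL k u g).getD i 0)) = k := by
    rw [List.countP_eq_length.mpr, List.length_range]
    intro i hi
    rw [List.mem_range] at hi
    rw [getD_mkL hi]
    simp only [decide_eq_true_eq]
    omega
  have h2 : (((List.range (below k g).length).map (k + ·)).countP
      (fun i => decide (i + 1 ≤ (mkL k u g).getD i 0))) = 0 := by
    rw [List.countP_eq_zero]
    intro a ha
    rw [List.mem_map] at ha
    obtain ⟨t, ht, rfl⟩ := ha
    rw [List.mem_range] at ht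
    have h3 : (mkL k u g).getD (k + t) 0 = (below k g).getD t 0 := by
      rw [← getD_drop, drop_mkL]
    have h4 : (below k g).getD t 0 ≤ k := by
      rw [List.getD_eq_getElem _ _ ht]
      exact (below_le _ (List.getElem_mem ht)).2
    simp only [decide_eq_true_eq]
    omega
  omega

lemma conj_mkL {k : ℕ} {u g : ℕ → ℕ} {j : ℕ} (h1 : 1 ≤ j) (h2 : j ≤ k) :
    conj (mkL k u g) j = k + tl g k j := by
  unfold conj
  rw [mkL, List.countP_append, countP_le_below h1]
  congr 1
  rw [List.countP_eq_length.mpr, length_rows]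
  intro a ha
  have := mem_rows ha
  simp only [decide_eq_true_eq]
  omega

lemma rank_mkL {k : ℕ} {u g : ℕ → ℕ} {i : ℕ} (h : i < k) :
    rank (mkL k u g) i = (tl u k (i + 1) : ℤ) - (tl g k (i + 1) : ℤ) := by
  unfold rank
  rw [getD_mkL h, conj_mkL (by omega) (by omega)]
  push_cast
  ring

lemma ranks_mkL {k : ℕ} {u g : ℕ → ℕ} :
    ranks (mkL k u g) =
      (List.range k).map (fun i => (tl u k (i + 1) : ℤ) - (tl g k (i + 1) : ℤ)) := by
  unfold ranks
  rw [durfee_mkL]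
  exact List.map_congr_left (fun i hi => rank_mkL (List.mem_range.mp hi))

/-- extraction of the horizontal gap vector -/
def Ux (L : List ℕ) (k : ℕ) (j : ℕ) : ℕ :=
  if j = k then L.getD (k - 1) 0 - k else L.getD (j - 1) 0 - L.getD j 0

/-- extraction of the below-Durfee multiplicities -/
def Gx (L : List ℕ) (k : ℕ) (j : ℕ) : ℕ := (L.drop k).count j

lemma tl_Ux {L : List ℕ} (hL : L.Pairwise (· ≥ ·)) {i : ℕ} (hi : i < durfee L) :
    durfee L + tl (Ux L (durfee L)) (durfee L) (i + 1) = L.getD i 0 := by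
  set k := durfee L with hk
  have key : ∀ d i, i < k → k - i = d + 1 → k + tl (Ux L k) k (i + 1) = L.getD i 0 := by
    intro d
    induction d with
    | zero =>
      intro i hi hd
      have hik : i = k - 1 := by omega
      have hi1 : i + 1 = k := by omega
      rw [hi1, tl_last]
      rw [Ux, if_pos rfl, ← hik]
      have h5 : i + 1 ≤ L.getD i 0 := durfee_spec₁ hL hi
      omega
    | succ d ih =>
      intro i hi hd
      have h1 : i + 1 < k := by omega
      have e2 := ih (i + 1) h1 (by omega)
      rw [tl_succ (show i + 1 ≤ k by omega)]
      have hU : Ux L k (i + 1) = L.getD i 0 - L.getD (i + 1) 0 := by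
        rw [Ux, if_neg (by omega)]
        simp
      have hmono : L.getD (i + 1) 0 ≤ L.getD i 0 := getD_anti hL (by omega)
      have h5 : i + 1 ≤ L.getD i 0 := durfee_spec₁ hL hi
      have h6 : i + 2 ≤ L.getD (i + 1) 0 := durfee_spec₁ hL h1
      omega
  exact key (k - i - 1) i hi (by omega)

lemma take_eq_rows {L : List ℕ} (hL : L.Pairwise (· ≥ ·)) :
    L.take (durfee L) = rows (durfee L) (Ux L (durfee L)) := by
  set k := durfee L with hk
  have hlen : k ≤ L.length := durfee_le_length L
  apply List.ext_getElem
  · rw [List.length_take, length_rows]; omega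
  · intro i h1 h2
    rw [length_rows] at h2
    rw [List.getElem_take]
    have h3 := tl_Ux hL (show i < durfee L from h2)
    rw [← hk] at h3
    have h4 : (rows k (Ux L k))[i] = k + tl (Ux L k) k (i + 1) := by simp [rows]
    rw [h4, h3, List.getD_eq_getElem _ _ (by omega)]

lemma drop_eq_below {L : List ℕ} (hL : L.Pairwise (· ≥ ·)) (hpos : ∀ x ∈ L, 0 < x) :
    L.drop (durfee L) = below (durfee L) (Gx L (durfee L)) := by
  set k := durfee L with hk
  have hdle : ∀ x ∈ L.drop k, 1 ≤ x ∧ x ≤ k := by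
    intro x hx
    obtain ⟨t, ht, rfl⟩ := List.mem_iff_getElem.mp hx
    have hxl : (L.drop k)[t] ∈ L := (List.drop_sublist k L).mem (List.getElem_mem ht)
    constructor
    · exact hpos _ hxl
    · rw [List.getElem_drop]
      have h1 : k + t < L.length := by
        have := List.length_drop (i := k) (l := L)
        omega
      have h2 : L[k + t] = L.getD (k + t) 0 := (List.getD_eq_getElem _ _ h1).symm
      rw [h2]
      calc L.getD (k + t) 0 ≤ L.getD k 0 := getD_anti hL (by omega)
        _ ≤ k := durfee_spec₂ hL le_rfl (by omega)
  apply List.Perm.eq_of_pairwise' (hL.sublist (List.drop_sublist k L)) sorted_below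
  rw [List.perm_iff_count]
  intro v
  rw [count_below]
  by_cases h : 1 ≤ v ∧ v ≤ k
  · rw [if_pos h]; rfl
  · rw [if_neg h, List.count_eq_zero]
    intro hv
    exact h (hdle v hv)

lemma L_eq_mkL {L : List ℕ} (hL : L.Pairwise (· ≥ ·)) (hpos : ∀ x ∈ L, 0 < x) :
    L = mkL (durfee L) (Ux L (durfee L)) (Gx L (durfee L)) := by
  conv_lhs => rw [← List.take_append_drop (durfee L) L]
  rw [take_eq_rows hL, drop_eq_below hL hpos, mkL]

/-! ### chunk 4: extraction of mkL, congruence, sig, partitions, Sep -/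

lemma Ux_mkL {k : ℕ} {u g : ℕ → ℕ} {j : ℕ} (h1 : 1 ≤ j) (h2 : j ≤ k) :
    Ux (mkL k u g) k j = u j := by
  rcases eq_or_lt_of_le h2 with rfl | hjk
  · rw [Ux, if_pos rfl, getD_mkL (show j - 1 < j by omega)]
    have : j - 1 + 1 = j := by omega
    rw [this, tl_last]
    omega
  · rw [Ux, if_neg (by omega), getD_mkL (show j - 1 < k by omega),
      getD_mkL (show j < k by omega)]
    have h3 : j - 1 + 1 = j := by omega
    rw [h3]
    have h4 := tl_succ (u := u) (k := k) (i := j) (by omega)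
    omega

lemma Gx_mkL {k : ℕ} {u g : ℕ → ℕ} {j : ℕ} (h1 : 1 ≤ j) (h2 : j ≤ k) :
    Gx (mkL k u g) k j = g j := by
  rw [Gx, drop_mkL, count_below, if_pos ⟨h1, h2⟩]

lemma mkL_congr {k : ℕ} {u g u' g' : ℕ → ℕ}
    (hu : ∀ j, 1 ≤ j → j ≤ k → u j = u' j) (hg : ∀ j, 1 ≤ j → j ≤ k → g j = g' j) :
    mkL k u g = mkL k u' g' := by
  have hb : ∀ k' : ℕ, k' ≤ k → below k' g = below k' g' := by
    intro k'
    induction k' with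
    | zero => intro _; rfl
    | succ k' ih =>
      intro h
      rw [below, below, ih (by omega), hg (k' + 1) (by omega) (by omega)]
  rw [mkL, mkL, hb k le_rfl]
  congr 1
  rw [rows, rows]
  apply List.map_congr_left
  intro t ht
  rw [List.mem_range] at ht
  rw [tl_congr hu (by omega)]

lemma sig_below {k : ℕ} {g : ℕ → ℕ} :
    (below k g).dedup.length = ((Finset.range k).filter (fun j => g (j + 1) ≠ 0)).card := by
  classical
  rw [← List.card_toFinset]
  have h : (below k g).toFinset =
      ((Finset.range k).filter (fun j => g (j + 1) ≠ 0)).image (· + 1) := by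
    ext v
    simp only [List.mem_toFinset, mem_below_iff, Finset.mem_image, Finset.mem_filter,
      Finset.mem_range]
    constructor
    · rintro ⟨h1, h2, h3⟩
      exact ⟨v - 1, ⟨by omega, by rwa [show v - 1 + 1 = v by omega]⟩, by omega⟩
    · rintro ⟨j, ⟨hj, hgj⟩, rfl⟩
      exact ⟨by omega, by omega, hgj⟩
  rw [h, Finset.card_image_of_injective _ (fun a b h => by omega)]

lemma sig_mkL {k : ℕ} {u g : ℕ → ℕ} :
    sig (mkL k u g) = ((Finset.range k).filter (fun j => g (j + 1) ≠ 0)).card := by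
  rw [sig, durfee_mkL, drop_mkL, sig_below]

/-- make a partition out of a list -/
def toPart {n : ℕ} (L : List ℕ) (hpos : ∀ x ∈ L, 0 < x) (hn : L.sum = n) : n.Partition :=
  ⟨(L : Multiset ℕ), fun {i} hi => hpos i (by simpa using hi), by simpa using hn⟩

lemma sparts_sorted {n : ℕ} (π : n.Partition) : (sparts π).Pairwise (· ≥ ·) :=
  Multiset.pairwise_sort _ _

lemma sparts_pos {n : ℕ} (π : n.Partition) : ∀ x ∈ sparts π, 0 < x := by
  intro x hx
  rw [sparts, Multiset.mem_sort] at hx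
  exact π.parts_pos hx

lemma sparts_sum {n : ℕ} (π : n.Partition) : (sparts π).sum = n := by
  have h : ((sparts π : List ℕ) : Multiset ℕ) = π.parts := Multiset.sort_eq _ _
  have h2 := π.parts_sum
  rw [← h] at h2
  simpa using h2

lemma parts_eq_sparts {n : ℕ} (π : n.Partition) : π.parts = ((sparts π : List ℕ) : Multiset ℕ) :=
  (Multiset.sort_eq _ _).symm

lemma sparts_toPart {n : ℕ} {L : List ℕ} (hs : L.Pairwise (· ≥ ·)) (hpos : ∀ x ∈ L, 0 < x)
    (hn : L.sum = n) : sparts (toPart L hpos hn) = L := by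
  apply List.Perm.eq_of_pairwise' (Multiset.pairwise_sort _ _) hs
  rw [← Multiset.coe_eq_coe, Multiset.sort_eq]
  rfl

lemma partition_ext {n : ℕ} {π π' : n.Partition} (h : sparts π = sparts π') : π = π' := by
  apply Nat.Partition.ext
  rw [parts_eq_sparts π, parts_eq_sparts π', h]

/-- the separation (no common descent) condition -/
def Sep (u g : ℕ → ℕ) (k : ℕ) : Prop := ∀ j, 1 ≤ j → j ≤ k → u j = 0 ∨ g j = 0

lemma sep_unique {k : ℕ} {u g u' g' : ℕ → ℕ} (hs : Sep u g k) (hs' : Sep u' g' k)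
    (hr : ∀ i, 1 ≤ i → i ≤ k → (tl u k i : ℤ) - (tl g k i : ℤ) =
      (tl u' k i : ℤ) - (tl g' k i : ℤ)) :
    ∀ i, 1 ≤ i → i ≤ k + 1 → tl u k i = tl u' k i ∧ tl g k i = tl g' k i := by
  have key : ∀ d i, 1 ≤ i → i + d = k + 1 →
      tl u k i = tl u' k i ∧ tl g k i = tl g' k i := by
    intro d
    induction d with
    | zero =>
      intro i _ hd
      have : k < i := by omega
      rw [tl_zero_of_gt this, tl_zero_of_gt this, tl_zero_of_gt this, tl_zero_of_gt this]
      exact ⟨rfl, rfl⟩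
    | succ d ih =>
      intro i h1 hd
      have hik : i ≤ k := by omega
      obtain ⟨hu2, hg2⟩ := ih (i + 1) (by omega) (by omega)
      have hri := hr i h1 hik
      have e1 := tl_succ (u := u) (k := k) (i := i) hik
      have e2 := tl_succ (u := g) (k := k) (i := i) hik
      have e3 := tl_succ (u := u') (k := k) (i := i) hik
      have e4 := tl_succ (u := g') (k := k) (i := i) hik
      have h3 : u i = u' i ∧ g i = g' i := by
        rcases hs i h1 hik with h4 | h4 <;> rcases hs' i h1 hik with h5 | h5 <;>
          constructor <;> omega
      omega
  intro i h1 h2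
  exact key (k + 1 - i) i h1 (by omega)

lemma tl_update {u : ℕ → ℕ} {k j i : ℕ} (hj : 1 ≤ u j) :
    tl (Function.update u j (u j - 1)) k i + (if i ≤ j ∧ j ≤ k then 1 else 0) = tl u k i := by
  unfold tl
  by_cases h : i ≤ j ∧ j ≤ k
  · have hmem : j ∈ Finset.Ico i (k + 1) := by rw [Finset.mem_Ico]; omega
    rw [if_pos h, Finset.sum_update_of_mem hmem, ← Finset.add_sum_erase _ u hmem,
      Finset.erase_eq]
    omega
  · rw [if_neg h, Nat.add_zero]
    apply Finset.sum_congr rfl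
    intro x hx
    rw [Finset.mem_Ico] at hx
    rw [Function.update_of_ne (by omega)]

lemma sum_update_mul {u : ℕ → ℕ} {k j : ℕ} (hj1 : 1 ≤ j) (hjk : j ≤ k) (hj : 1 ≤ u j) :
    (∑ i ∈ Finset.Ico 1 (k + 1), i * Function.update u j (u j - 1) i) + j =
      ∑ i ∈ Finset.Ico 1 (k + 1), i * u i := by
  have hmem : j ∈ Finset.Ico 1 (k + 1) := by rw [Finset.mem_Ico]; omega
  have hfun : ∀ i ∈ Finset.Ico 1 (k + 1), i * Function.update u j (u j - 1) i =
      Function.update (fun i => i * u i) j (j * (u j - 1)) i := by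
    intro i _
    by_cases h : i = j
    · subst h; rw [Function.update_self, Function.update_self]
    · rw [Function.update_of_ne h, Function.update_of_ne h]
  rw [Finset.sum_congr rfl hfun, Finset.sum_update_of_mem hmem,
    ← Finset.add_sum_erase _ (fun i => i * u i) hmem, Finset.erase_eq]
  have h9 : j * (u j - 1) + j = j * u j := by
    cases' Nat.exists_eq_add_of_le hj with c hc
    rw [hc, show 1 + c - 1 = c by omega]
    ring
  omega

/-! ### chunk 5: basis characterization -/

lemma map_range_eq {k : ℕ} {f f' : ℕ → ℤ} (h : (List.range k).map f = (List.range k).map f')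
    {i : ℕ} (hi : i < k) : f i = f' i := by
  have h2 := congrArg (fun l => l.getD i (0 : ℤ)) h
  rw [List.getD_eq_getElem _ _ (by simpa using hi), List.getD_eq_getElem _ _ (by simpa using hi)]
    at h2
  simpa using h2

lemma ranks_eq_map {n : ℕ} (π : n.Partition) :
    ranks (sparts π) = (List.range (durfee (sparts π))).map
      (fun i => (tl (Ux (sparts π) (durfee (sparts π))) (durfee (sparts π)) (i + 1) : ℤ) -
        (tl (Gx (sparts π) (durfee (sparts π))) (durfee (sparts π)) (i + 1) : ℤ)) := by
  have h := L_eq_mkL (sparts_sorted π) (sparts_pos π)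
  conv_lhs => rw [h]
  rw [ranks_mkL]

lemma sum_eq {n : ℕ} (π : n.Partition) :
    n = durfee (sparts π) * durfee (sparts π) +
      (∑ j ∈ Finset.Ico 1 (durfee (sparts π) + 1),
        j * Ux (sparts π) (durfee (sparts π)) j) +
      ∑ j ∈ Finset.Ico 1 (durfee (sparts π) + 1), j * Gx (sparts π) (durfee (sparts π)) j := by
  have h2 := sparts_sum π
  rw [L_eq_mkL (sparts_sorted π) (sparts_pos π), sum_mkL] at h2
  omega

lemma decrement {m : ℕ} (π' : m.Partition) {j : ℕ} (h1 : 1 ≤ j)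
    (h2 : j ≤ durfee (sparts π'))
    (hu : Ux (sparts π') (durfee (sparts π')) j ≠ 0)
    (hg : Gx (sparts π') (durfee (sparts π')) j ≠ 0) :
    ∃ (m' : ℕ) (π'' : m'.Partition),
      ranks (sparts π'') = ranks (sparts π') ∧ m' + 2 * j = m := by
  set L := sparts π' with hL
  set k := durfee L with hk
  set u := Ux L k with hu'
  set g := Gx L k with hg'
  set u2 := Function.update u j (u j - 1) with hu2
  set g2 := Function.update g j (g j - 1) with hg2
  refine ⟨(mkL k u2 g2).sum, toPart _ pos_mkL rfl, ?_, ?_⟩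
  · rw [sparts_toPart sorted_mkL pos_mkL rfl, ranks_mkL, ranks_eq_map π', ← hL, ← hk]
    apply List.map_congr_left
    intro i hi
    rw [← hu', ← hg']
    rw [List.mem_range] at hi
    have e1 := tl_update (u := u) (k := k) (j := j) (i := i + 1) (by omega)
    have e2 := tl_update (u := g) (k := k) (j := j) (i := i + 1) (by omega)
    rw [← hu2] at e1
    rw [← hg2] at e2
    by_cases hc : i + 1 ≤ j ∧ j ≤ k
    · rw [if_pos hc] at e1 e2; omega
    · rw [if_neg hc] at e1 e2; omega
  · have hm := sum_eq π'
    rw [← hL, ← hk, ← hu', ← hg'] at hm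
    rw [sum_mkL]
    have s1 := sum_update_mul (u := u) h1 h2 (by omega)
    have s2 := sum_update_mul (u := g) h1 h2 (by omega)
    rw [← hu2] at s1
    rw [← hg2] at s2
    omega

theorem isBasis_iff {n : ℕ} (π : n.Partition) :
    IsBasis π ↔ Sep (Ux (sparts π) (durfee (sparts π))) (Gx (sparts π) (durfee (sparts π)))
      (durfee (sparts π)) := by
  set L := sparts π with hLdef
  set k := durfee L with hkdef
  constructor
  · intro hb j hj1 hj2
    by_contra hc
    push_neg at hc
    obtain ⟨m', π'', hr, hm⟩ := decrement π hj1 hj2 hc.1 hc.2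
    have := hb m' π'' hr
    omega
  · intro hsep
    intro m π' hr
    induction m using Nat.strong_induction_on with
    | _ m ih =>
      have hk' : durfee (sparts π') = k := by
        have h3 := congrArg List.length hr
        simpa [ranks] using h3
      set u' := Ux (sparts π') k with hu'def
      set g' := Gx (sparts π') k with hg'def
      by_cases hsep' : Sep u' g' k
      · -- the minimal (equal) case
        have hrm : (List.range k).map
            (fun i => (tl u' k (i + 1) : ℤ) - (tl g' k (i + 1) : ℤ)) =
            (List.range k).map
            (fun i => (tl (Ux L k) k (i + 1) : ℤ) - (tl (Gx L k) k (i + 1) : ℤ)) := by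
          have ha := ranks_eq_map π'
          rw [hk'] at ha
          have hb2 := ranks_eq_map π
          rw [← hLdef, ← hkdef] at hb2
          rw [ha, hb2] at hr
          exact hr
        have huni := sep_unique hsep' hsep (fun i hi1 hi2 => by
          have h5 := map_range_eq hrm (show i - 1 < k by omega)
          rw [show i - 1 + 1 = i by omega] at h5
          exact h5)
        have hn := sum_eq π
        rw [← hLdef, ← hkdef] at hn
        have hm := sum_eq π'
        rw [hk', ← hu'def, ← hg'def] at hm
        have hsu : ∑ j ∈ Finset.Ico 1 (k + 1), j * u' j =
            ∑ j ∈ Finset.Ico 1 (k + 1), j * Ux L k j := by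
          rw [← sum_tl, ← sum_tl]
          exact Finset.sum_congr rfl fun t ht =>
            (huni (t + 1) (by omega) (by
              rw [Finset.mem_range] at ht; omega)).1
        have hsg : ∑ j ∈ Finset.Ico 1 (k + 1), j * g' j =
            ∑ j ∈ Finset.Ico 1 (k + 1), j * Gx L k j := by
          rw [← sum_tl, ← sum_tl]
          exact Finset.sum_congr rfl fun t ht =>
            (huni (t + 1) (by omega) (by
              rw [Finset.mem_range] at ht; omega)).2
        omega
      · rw [Sep] at hsep'
        push_neg at hsep'
        obtain ⟨j, hj1, hj2, hu, hg⟩ := hsep'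
        obtain ⟨m', π'', hr'', hm⟩ := decrement π' hj1 (by rw [hk']; exact hj2)
          (by rw [hk']; exact hu) (by rw [hk']; exact hg)
        have h6 := ih m' (by omega) π'' (hr''.trans hr)
        omega

/-! ### chunk 6: counting -/

lemma sum_Ico_one {M : Type*} [AddCommMonoid M] (F : ℕ → M) (k : ℕ) :
    ∑ j ∈ Finset.Ico 1 (k + 1), F j = ∑ j ∈ Finset.range k, F (j + 1) := by
  rw [Finset.sum_Ico_eq_sum_range]
  simp only [Nat.add_sub_cancel]
  exact Finset.sum_congr rfl fun i _ => by rw [Nat.add_comm]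

noncomputable def cF (u g : ℕ → ℕ) (k : ℕ) : ℕ →₀ ℕ :=
  Finsupp.onFinset (Finset.range k)
    (fun j => if j < k then (j + 1) * (u (j + 1) + g (j + 1)) else 0)
    (fun a ha => by
      rw [Finset.mem_range]
      by_contra hc
      have ha' : (if a < k then (a + 1) * (u (a + 1) + g (a + 1)) else 0) ≠ 0 := ha
      rw [if_neg (by omega)] at ha'
      exact ha' rfl)

lemma cF_apply {u g : ℕ → ℕ} {k j : ℕ} (h : j < k) :
    cF u g k j = (j + 1) * (u (j + 1) + g (j + 1)) := by
  rw [cF, Finsupp.onFinset_apply, if_pos h]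

lemma cF_apply_ge {u g : ℕ → ℕ} {k j : ℕ} (h : k ≤ j) : cF u g k j = 0 := by
  rw [cF, Finsupp.onFinset_apply, if_neg (by omega)]

lemma cF_support {u g : ℕ → ℕ} {k : ℕ} : (cF u g k).support ⊆ Finset.range k := by
  intro a ha
  rw [Finsupp.mem_support_iff] at ha
  rw [Finset.mem_range]
  by_contra hc
  exact ha (cF_apply_ge (by omega))

def eF (g : ℕ → ℕ) (k : ℕ) : Finset ℕ := (Finset.range k).filter (fun j => g (j + 1) ≠ 0)

def Dset (n k : ℕ) : Finset (ℕ →₀ ℕ) :=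
  (Finset.finsuppAntidiag (Finset.range k) (n - k * k)).filter
    (fun l => ∀ j ∈ Finset.range k, (j + 1) ∣ l j)

def uOf (l : ℕ →₀ ℕ) (ε : Finset ℕ) (k : ℕ) (j : ℕ) : ℕ :=
  if 1 ≤ j ∧ j ≤ k ∧ (j - 1) ∉ ε then l (j - 1) / j else 0

def gOf (l : ℕ →₀ ℕ) (ε : Finset ℕ) (k : ℕ) (j : ℕ) : ℕ :=
  if 1 ≤ j ∧ j ≤ k ∧ (j - 1) ∈ ε then l (j - 1) / j else 0

lemma bCount3_eq_zero {n k s : ℕ} (h : n < k * k) : bCount3 n k s = 0 := by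
  rw [bCount3]
  have : IsEmpty {π : n.Partition // IsBasis π ∧ durfee (sparts π) = k ∧ sig (sparts π) = s} := by
    constructor
    rintro ⟨π, _, hd, _⟩
    have h2 := sum_eq π
    rw [hd] at h2
    omega
  exact Nat.card_of_isEmpty

theorem bCount3_eq {n k s : ℕ} (h : k * k ≤ n) :
    bCount3 n k s = ∑ l ∈ Dset n k, (l.support.card).choose s := by
  classical
  rw [bCount3, Nat.card_eq_fintype_card, Fintype.card_subtype]
  have hbij : (Finset.univ.filter
      (fun π : n.Partition => IsBasis π ∧ durfee (sparts π) = k ∧ sig (sparts π) = s)).card =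
      ((Dset n k).sigma (fun l => Finset.powersetCard s l.support)).card := by
    apply Finset.card_bij (fun π _ =>
      (⟨cF (Ux (sparts π) k) (Gx (sparts π) k) k, eF (Gx (sparts π) k) k⟩ :
        Σ _ : ℕ →₀ ℕ, Finset ℕ))
    -- membership
    · intro π hπ
      rw [Finset.mem_filter] at hπ
      obtain ⟨-, hb, hd, hs⟩ := hπ
      have hsum := sum_eq π
      rw [hd] at hsum
      have hdrop : (sparts π).drop k = below k (Gx (sparts π) k) := by
        have h7 := drop_eq_below (sparts_sorted π) (sparts_pos π)
        rwa [hd] at h7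
      rw [Finset.mem_sigma]
      constructor
      · dsimp only
        rw [Dset, Finset.mem_filter, Finset.mem_finsuppAntidiag]
        refine ⟨⟨?_, cF_support⟩, ?_⟩
        · have hc : ∀ j ∈ Finset.range k, cF (Ux (sparts π) k) (Gx (sparts π) k) k j =
              (j + 1) * (Ux (sparts π) k (j + 1) + Gx (sparts π) k (j + 1)) :=
            fun j hj => cF_apply (Finset.mem_range.mp hj)
          have e0 : Finset.sum (Finset.range k) (cF (Ux (sparts π) k) (Gx (sparts π) k) k) =
              ∑ j ∈ Finset.range k,
                (j + 1) * (Ux (sparts π) k (j + 1) + Gx (sparts π) k (j + 1)) :=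
            Finset.sum_congr rfl hc
          have e1 : ∑ j ∈ Finset.range k,
              (j + 1) * (Ux (sparts π) k (j + 1) + Gx (sparts π) k (j + 1)) =
              ∑ j ∈ Finset.Ico 1 (k + 1), j * (Ux (sparts π) k j + Gx (sparts π) k j) :=
            (sum_Ico_one (fun j => j * (Ux (sparts π) k j + Gx (sparts π) k j)) k).symm
          have e2 : ∑ j ∈ Finset.Ico 1 (k + 1),
              j * (Ux (sparts π) k j + Gx (sparts π) k j) =
              (∑ j ∈ Finset.Ico 1 (k + 1), j * Ux (sparts π) k j) +
              ∑ j ∈ Finset.Ico 1 (k + 1), j * Gx (sparts π) k j := by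
            rw [← Finset.sum_add_distrib]
            exact Finset.sum_congr rfl fun j _ => by ring
          omega
        · intro j hj
          rw [cF_apply (Finset.mem_range.mp hj)]
          exact dvd_mul_right _ _
      · dsimp only
        rw [Finset.mem_powersetCard]
        constructor
        · intro j hj
          rw [eF, Finset.mem_filter, Finset.mem_range] at hj
          rw [Finsupp.mem_support_iff, cF_apply hj.1]
          exact Nat.mul_ne_zero (by omega) (by omega)
        · rw [← hs, sig, hd, hdrop, sig_below]
          rfl
    -- injectivity
    · intro π₁ hπ₁ π₂ hπ₂ heq
      rw [Finset.mem_filter] at hπ₁ hπ₂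
      obtain ⟨-, hb₁, hd₁, -⟩ := hπ₁
      obtain ⟨-, hb₂, hd₂, -⟩ := hπ₂
      have hsep₁ : Sep (Ux (sparts π₁) k) (Gx (sparts π₁) k) k := by
        have := (isBasis_iff π₁).mp hb₁
        rwa [hd₁] at this
      have hsep₂ : Sep (Ux (sparts π₂) k) (Gx (sparts π₂) k) k := by
        have := (isBasis_iff π₂).mp hb₂
        rwa [hd₂] at this
      have hc : cF (Ux (sparts π₁) k) (Gx (sparts π₁) k) k =
          cF (Ux (sparts π₂) k) (Gx (sparts π₂) k) k := congrArg Sigma.fst heq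
      have he : eF (Gx (sparts π₁) k) k = eF (Gx (sparts π₂) k) k := by
        have h2 := congrArg Sigma.snd heq
        exact h2
      have claim : ∀ j, 1 ≤ j → j ≤ k →
          Ux (sparts π₁) k j = Ux (sparts π₂) k j ∧
          Gx (sparts π₁) k j = Gx (sparts π₂) k j := by
        intro j hj1 hj2
        have hcj : cF (Ux (sparts π₁) k) (Gx (sparts π₁) k) k (j - 1) =
            cF (Ux (sparts π₂) k) (Gx (sparts π₂) k) k (j - 1) := by rw [hc]
        rw [cF_apply (show j - 1 < k by omega), cF_apply (show j - 1 < k by omega),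
          show j - 1 + 1 = j by omega] at hcj
        have hxy : Ux (sparts π₁) k j + Gx (sparts π₁) k j =
            Ux (sparts π₂) k j + Gx (sparts π₂) k j :=
          Nat.eq_of_mul_eq_mul_left (by omega) hcj
        have hej : (Gx (sparts π₁) k j ≠ 0) ↔ (Gx (sparts π₂) k j ≠ 0) := by
          have h3 : (j - 1) ∈ eF (Gx (sparts π₁) k) k ↔
              (j - 1) ∈ eF (Gx (sparts π₂) k) k := by rw [he]
          rw [eF, eF, Finset.mem_filter, Finset.mem_filter, Finset.mem_range,
            show j - 1 + 1 = j by omega] at h3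
          constructor
          · intro h4; exact (h3.mp ⟨by omega, h4⟩).2
          · intro h4; exact (h3.mpr ⟨by omega, h4⟩).2
        have hs1 := hsep₁ j hj1 hj2
        have hs2 := hsep₂ j hj1 hj2
        constructor <;> omega
      apply partition_ext
      have hL1 : sparts π₁ = mkL k (Ux (sparts π₁) k) (Gx (sparts π₁) k) := by
        have h5 := L_eq_mkL (sparts_sorted π₁) (sparts_pos π₁)
        rwa [hd₁] at h5
      have hL2 : sparts π₂ = mkL k (Ux (sparts π₂) k) (Gx (sparts π₂) k) := by
        have h5 := L_eq_mkL (sparts_sorted π₂) (sparts_pos π₂)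
        rwa [hd₂] at h5
      rw [hL1, hL2]
      exact mkL_congr (fun j a b => (claim j a b).1) (fun j a b => (claim j a b).2)
    -- surjectivity
    · rintro ⟨l, ε⟩ hb
      rw [Finset.mem_sigma, Dset, Finset.mem_filter, Finset.mem_finsuppAntidiag,
        Finset.mem_powersetCard] at hb
      obtain ⟨⟨⟨hlsum, hlsupp⟩, hdvd⟩, hεsub, hεcard⟩ := hb
      have key : ∀ j < k, (j + 1) * (uOf l ε k (j + 1) + gOf l ε k (j + 1)) = l j := by
        intro j hj
        have hd : (j + 1) ∣ l j := hdvd j (Finset.mem_range.mpr hj)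
        rw [uOf, gOf, Nat.add_sub_cancel]
        by_cases hε' : j ∈ ε
        · rw [if_neg (by tauto), if_pos ⟨by omega, by omega, hε'⟩]
          rw [Nat.zero_add]
          exact Nat.mul_div_cancel' hd
        · rw [if_pos ⟨by omega, by omega, hε'⟩, if_neg (by tauto)]
          rw [Nat.add_zero]
          exact Nat.mul_div_cancel' hd
      have hfil : (Finset.range k).filter (fun j => gOf l ε k (j + 1) ≠ 0) = ε := by
        ext j
        rw [Finset.mem_filter, Finset.mem_range]
        constructor
        · rintro ⟨-, h2⟩
          rw [gOf, Nat.add_sub_cancel] at h2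
          by_contra h3
          rw [if_neg (by tauto)] at h2
          exact h2 rfl
        · intro hj
          have hjs : j ∈ l.support := hεsub hj
          have hjk : j < k := Finset.mem_range.mp (hlsupp hjs)
          have hlj : l j ≠ 0 := Finsupp.mem_support_iff.mp hjs
          have hd : (j + 1) ∣ l j := hdvd j (Finset.mem_range.mpr hjk)
          refine ⟨hjk, ?_⟩
          rw [gOf, Nat.add_sub_cancel, if_pos ⟨by omega, by omega, hj⟩]
          intro h4
          have h5 := Nat.mul_div_cancel' hd
          rw [h4, Nat.mul_zero] at h5
          exact hlj h5.symm
      have hsum' : (mkL k (uOf l ε k) (gOf l ε k)).sum = n := by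
        rw [sum_mkL]
        have e1 : ∑ j ∈ Finset.Ico 1 (k + 1), j * (uOf l ε k j + gOf l ε k j) =
            (∑ j ∈ Finset.Ico 1 (k + 1), j * uOf l ε k j) +
            ∑ j ∈ Finset.Ico 1 (k + 1), j * gOf l ε k j := by
          rw [← Finset.sum_add_distrib]
          exact Finset.sum_congr rfl fun j _ => by ring
        have e2 : ∑ j ∈ Finset.Ico 1 (k + 1), j * (uOf l ε k j + gOf l ε k j) =
            ∑ j ∈ Finset.range k, (j + 1) * (uOf l ε k (j + 1) + gOf l ε k (j + 1)) :=
          sum_Ico_one (fun j => j * (uOf l ε k j + gOf l ε k j)) k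
        have e3 : ∑ j ∈ Finset.range k, (j + 1) * (uOf l ε k (j + 1) + gOf l ε k (j + 1)) =
            ∑ j ∈ Finset.range k, l j :=
          Finset.sum_congr rfl fun j hj => key j (Finset.mem_range.mp hj)
        have e4 : ∑ j ∈ Finset.range k, l j = n - k * k := hlsum
        omega
      refine ⟨toPart (mkL k (uOf l ε k) (gOf l ε k)) pos_mkL hsum', ?_, ?_⟩
      · rw [Finset.mem_filter]
        have hsp : sparts (toPart (mkL k (uOf l ε k) (gOf l ε k)) pos_mkL hsum') =
            mkL k (uOf l ε k) (gOf l ε k) := sparts_toPart sorted_mkL pos_mkL hsum'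
        refine ⟨Finset.mem_univ _, ?_, ?_, ?_⟩
        · rw [isBasis_iff, hsp, durfee_mkL]
          intro j hj1 hj2
          rw [Ux_mkL hj1 hj2, Gx_mkL hj1 hj2, uOf, gOf]
          by_cases hε' : (j - 1) ∈ ε
          · left; rw [if_neg (by tauto)]
          · right; rw [if_neg (by tauto)]
        · rw [hsp, durfee_mkL]
        · rw [hsp, sig_mkL, hfil, hεcard]
      · have hsp : sparts (toPart (mkL k (uOf l ε k) (gOf l ε k)) pos_mkL hsum') =
            mkL k (uOf l ε k) (gOf l ε k) := sparts_toPart sorted_mkL pos_mkL hsum'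
        have h1 : cF (Ux (sparts (toPart (mkL k (uOf l ε k) (gOf l ε k)) pos_mkL hsum')) k)
            (Gx (sparts (toPart (mkL k (uOf l ε k) (gOf l ε k)) pos_mkL hsum')) k) k = l := by
          rw [hsp]
          apply Finsupp.ext
          intro j
          rcases lt_or_ge j k with hj | hj
          · rw [cF_apply hj, Ux_mkL (by omega) (by omega), Gx_mkL (by omega) (by omega)]
            exact key j hj
          · rw [cF_apply_ge hj]
            by_contra h2
            have h3 : j ∈ l.support := Finsupp.mem_support_iff.mpr fun h4 => h2 h4.symm
            have := Finset.mem_range.mp (hlsupp h3)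
            omega
        have h2 : eF (Gx (sparts (toPart (mkL k (uOf l ε k) (gOf l ε k)) pos_mkL hsum')) k) k
            = ε := by
          rw [hsp]
          have h3 : eF (Gx (mkL k (uOf l ε k) (gOf l ε k)) k) k =
              (Finset.range k).filter (fun j => gOf l ε k (j + 1) ≠ 0) := by
            rw [eF]
            apply Finset.filter_congr
            intro j hj
            have hjk := Finset.mem_range.mp hj
            rw [Gx_mkL (by omega) (by omega : j + 1 ≤ k)]
          rw [h3, hfil]
        rw [h1, h2]
  rw [hbij, Finset.card_sigma]
  exact Finset.sum_congr rfl fun l _ => Finset.card_powersetCard _ _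

/-! ### chunk 7: power series computations -/

noncomputable def Hser (m : ℕ) : PowerSeries (RatFunc ℚ) :=
  PowerSeries.mk fun t => if t = 0 then 1 else if m ∣ t then 1 + RatFunc.X else 0

lemma Hser_key {m : ℕ} (hm : 1 ≤ m) :
    (1 - PowerSeries.X ^ m) * Hser m =
      1 + PowerSeries.C (RatFunc.X : RatFunc ℚ) * PowerSeries.X ^ m := by
  ext n
  rw [one_sub_mul, map_sub, PowerSeries.coeff_X_pow_mul', map_add, PowerSeries.coeff_one,
    PowerSeries.coeff_C_mul, PowerSeries.coeff_X_pow]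
  simp only [Hser, PowerSeries.coeff_mk]
  rcases Nat.eq_zero_or_pos n with rfl | hn
  · rw [if_pos rfl, if_pos rfl, if_neg (by omega : ¬ m ≤ 0), if_neg (by omega : (0:ℕ) ≠ m)]
    ring
  · rw [if_neg (by omega : n ≠ 0), if_neg (by omega : n ≠ 0)]
    by_cases hmn : m ≤ n
    · rw [if_pos hmn]
      by_cases hd : m ∣ n
      · rw [if_pos hd]
        by_cases he : n = m
        · subst he
          rw [if_pos (Nat.sub_self n), if_pos rfl]
          ring
        · have h2 : n - m ≠ 0 := by omega
          have h3 : m ∣ (n - m) := Nat.dvd_sub hd dvd_rfl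
          rw [if_neg h2, if_pos h3, if_neg he]
          ring
      · have hne : n ≠ m := fun hc => hd (hc ▸ dvd_rfl)
        have h2 : n - m ≠ 0 := by omega
        have h3 : ¬ m ∣ (n - m) := by
          intro hc
          apply hd
          have := Nat.dvd_add hc (dvd_refl m)
          rwa [Nat.sub_add_cancel hmn] at this
        rw [if_neg hd, if_neg h2, if_neg h3, if_neg hne]
        ring
    · rw [if_neg hmn]
      have hd : ¬ m ∣ n := fun hc => hmn (Nat.le_of_dvd hn hc)
      have hne : n ≠ m := by omega
      rw [if_neg hd, if_neg hne]
      ring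

lemma Hser_eq {m : ℕ} (hm : 1 ≤ m) :
    (1 + PowerSeries.C (RatFunc.X : RatFunc ℚ) * PowerSeries.X ^ m) *
      (1 - PowerSeries.X ^ m : PowerSeries (RatFunc ℚ))⁻¹ = Hser m := by
  have hunit : PowerSeries.constantCoeff (1 - PowerSeries.X ^ m : PowerSeries (RatFunc ℚ)) ≠ 0 := by
    rw [map_sub, map_one, map_pow, PowerSeries.constantCoeff_X, zero_pow (by omega : m ≠ 0),
      sub_zero]
    exact one_ne_zero
  calc (1 + PowerSeries.C (RatFunc.X : RatFunc ℚ) * PowerSeries.X ^ m) *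
      (1 - PowerSeries.X ^ m : PowerSeries (RatFunc ℚ))⁻¹
      = ((1 - PowerSeries.X ^ m) * Hser m) * (1 - PowerSeries.X ^ m)⁻¹ := by
        rw [Hser_key hm]
    _ = Hser m * ((1 - PowerSeries.X ^ m) * (1 - PowerSeries.X ^ m)⁻¹) := by ring
    _ = Hser m := by rw [PowerSeries.mul_inv_cancel _ hunit, mul_one]

lemma coeff_prod_H (k N : ℕ) :
    PowerSeries.coeff N (∏ j ∈ Finset.range k, Hser (j + 1)) =
      ∑ l ∈ (Finset.finsuppAntidiag (Finset.range k) N).filter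
        (fun l => ∀ j ∈ Finset.range k, (j + 1) ∣ l j),
        (1 + RatFunc.X) ^ l.support.card := by
  rw [PowerSeries.coeff_prod]
  have hterm : ∀ l ∈ Finset.finsuppAntidiag (Finset.range k) N,
      (∏ j ∈ Finset.range k, PowerSeries.coeff (l j) (Hser (j + 1))) =
      if (∀ j ∈ Finset.range k, (j + 1) ∣ l j) then (1 + RatFunc.X) ^ l.support.card
      else 0 := by
    intro l hl
    rw [Finset.mem_finsuppAntidiag] at hl
    by_cases hp : ∀ j ∈ Finset.range k, (j + 1) ∣ l j
    · rw [if_pos hp]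
      have h1 : ∀ j ∈ Finset.range k, PowerSeries.coeff (l j) (Hser (j + 1)) =
          if l j ≠ 0 then 1 + RatFunc.X else 1 := by
        intro j hj
        rw [Hser, PowerSeries.coeff_mk]
        by_cases h2 : l j = 0
        · rw [if_pos h2, if_neg (by tauto)]
        · rw [if_neg h2, if_pos (hp j hj), if_pos h2]
      rw [Finset.prod_congr rfl h1, ← Finset.prod_filter]
      have h3 : (Finset.range k).filter (fun j => l j ≠ 0) = l.support := by
        ext j
        rw [Finset.mem_filter, Finsupp.mem_support_iff]
        constructor
        · exact fun h => h.2
        · exact fun h => ⟨hl.2 (Finsupp.mem_support_iff.mpr h), h⟩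
      rw [h3, Finset.prod_const]
    · rw [if_neg hp]
      push_neg at hp
      obtain ⟨j0, hj0, hnd⟩ := hp
      apply Finset.prod_eq_zero hj0
      rw [Hser, PowerSeries.coeff_mk,
        if_neg (show ¬ l j0 = 0 from fun hc => hnd (by rw [hc]; exact dvd_zero _)),
        if_neg hnd]
  rw [Finset.sum_congr rfl hterm, Finset.sum_filter]
  exact Finset.sum_congr rfl fun a _ => by split_ifs with h1 h2 <;> tauto

lemma binom_sum {d n : ℕ} (h : d ≤ n) :
    ∑ s ∈ Finset.range (n + 1), (d.choose s : RatFunc ℚ) * RatFunc.X ^ s =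
      (1 + RatFunc.X) ^ d := by
  rw [add_comm (1 : RatFunc ℚ) RatFunc.X, add_pow]
  rw [← Finset.sum_subset (Finset.range_subset_range.mpr (by omega : d + 1 ≤ n + 1))]
  · apply Finset.sum_congr rfl
    intro s _
    rw [one_pow, mul_one, mul_comm]
  · intro s hs hns
    rw [Finset.mem_range] at hs
    rw [Finset.mem_range, not_lt] at hns
    rw [Nat.choose_eq_zero_of_lt (by omega)]
    simp

lemma supp_card_le {n k : ℕ} {l : ℕ →₀ ℕ} (hl : l ∈ Dset n k) :
    l.support.card ≤ n - k * k := by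
  rw [Dset, Finset.mem_filter, Finset.mem_finsuppAntidiag] at hl
  obtain ⟨⟨hsum, hsupp⟩, -⟩ := hl
  calc l.support.card = ∑ _j ∈ l.support, 1 := by rw [Finset.card_eq_sum_ones]
    _ ≤ ∑ j ∈ l.support, l j := Finset.sum_le_sum fun j hj => by
        have := Finsupp.mem_support_iff.mp hj; omega
    _ = ∑ j ∈ Finset.range k, l j := Finset.sum_subset hsupp fun x _ hx => by
        rwa [← Finsupp.notMem_support_iff]
    _ = n - k * k := hsum


theorem statement4 (k : ℕ) :
    (PowerSeries.mk fun n =>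
        ∑ s ∈ Finset.range (n + 1), (bCount3 n k s : RatFunc ℚ) * RatFunc.X ^ s) =
      PowerSeries.X ^ (k ^ 2) *
        ∏ j ∈ Finset.range k,
          (1 + PowerSeries.C (RatFunc.X : RatFunc ℚ) * PowerSeries.X ^ (j + 1)) *
            (1 - PowerSeries.X ^ (j + 1) : PowerSeries (RatFunc ℚ))⁻¹ := by
  rw [Finset.prod_congr rfl
    (fun j (_ : j ∈ Finset.range k) => Hser_eq (show 1 ≤ j + 1 by omega))]
  ext n
  rw [PowerSeries.coeff_mk, PowerSeries.coeff_X_pow_mul']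
  by_cases h : k ^ 2 ≤ n
  · rw [if_pos h, coeff_prod_H]
    have hkk : k * k ≤ n := by rwa [← pow_two]
    have hnn : n - k ^ 2 = n - k * k := by rw [pow_two]
    rw [hnn]
    have hL : ∀ s ∈ Finset.range (n + 1), (bCount3 n k s : RatFunc ℚ) * RatFunc.X ^ s =
        ∑ l ∈ Dset n k, (l.support.card.choose s : RatFunc ℚ) * RatFunc.X ^ s := by
      intro s _
      rw [bCount3_eq hkk]
      push_cast
      rw [Finset.sum_mul]
    rw [Finset.sum_congr rfl hL, Finset.sum_comm]
    have hR : ∀ l ∈ Dset n k, (∑ s ∈ Finset.range (n + 1),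
        (l.support.card.choose s : RatFunc ℚ) * RatFunc.X ^ s) =
        (1 + RatFunc.X) ^ l.support.card := fun l hl =>
      binom_sum (le_trans (supp_card_le hl) (by omega))
    rw [Finset.sum_congr rfl hR]
    unfold Dset
    rw [Finset.sum_filter, Finset.sum_filter]
    exact Finset.sum_congr rfl fun a _ => by split_ifs <;> tauto
  · rw [if_neg h]
    have h0 : ∀ s ∈ Finset.range (n + 1), (bCount3 n k s : RatFunc ℚ) * RatFunc.X ^ s = 0 := by
      intro s _
      rw [bCount3_eq_zero (show n < k * k by rw [pow_two] at h; omega), Nat.cast_zero, zero_mul]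
    rw [Finset.sum_congr rfl h0, Finset.sum_const_zero]

end BasisPartitions
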